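/- Let N ≥ 1, y₀ ∈ ℝ, and equal weights w_1 = w_2 = … = w_N = w ∈ ℝ. Then the point α* ∈ ℝ^N with α*_j = 1/(N+1) for every j is a critical point of G̃(α) = y₀ Σ_{n=1}^{N} α_n (1 − Σ_{i=1}^{n} α_i) w_n Π_{i=1}^{n−1}(1−α_i); that is, ∂G̃/∂α_m(α*) = 0 for every m ∈ {1,…,N}. -/

import Mathlib

/-- The durable-good total revenue
`G̃(α) = y₀ Σ_{n=1}^{N} α_n (1 − Σ_{i=1}^{n} α_i) w_n Π_{i=1}^{n−1}(1−α_i)`,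
written with `0`-based indexing over `Fin N`. -/
noncomputable def durableRevenue (N : ℕ) (y₀ : ℝ) (w α : Fin N → ℝ) : ℝ :=
  y₀ * ∑ n : Fin N,
    α n * (1 - ∑ i ∈ Finset.Iic n, α i) * w n * ∏ i ∈ Finset.Iio n, (1 - α i)

/-- The simplex `K = {α ∈ ℝ^N : α_j ≥ 0 for all j, Σ_j α_j ≤ 1}`. -/
def simplexK (N : ℕ) : Set (Fin N → ℝ) :=
  {α | (∀ j, 0 ≤ α j) ∧ ∑ j, α j ≤ 1}


open Finset

/-- The per-coordinate derivative values of the revenue at the symmetric point. -/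
noncomputable def dAux (a c : ℝ) (M : ℕ) (n : ℕ) : ℝ :=
  if n < M then 0
  else if n = M then c * (1 - a) ^ M * (1 - ((M : ℝ) + 2) * a)
  else a * c * (1 - a) ^ (n - 1) * (((n : ℝ) + 2) * a - 2)

lemma dAux_sum (N M : ℕ) (hMN : M < N) (c a : ℝ) (ha : a * ((N : ℝ) + 1) = 1) :
    ∑ n ∈ Finset.range N, dAux a c M n = 0 := by
  have h1 : ∑ n ∈ Ico 0 M, dAux a c M n = 0 := by
    apply Finset.sum_eq_zero
    intro n hn
    exact if_pos (mem_Ico.mp hn).2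
  have hsplit : ∑ n ∈ Ico 0 M, dAux a c M n + ∑ n ∈ Ico M N, dAux a c M n
      = ∑ n ∈ Ico 0 N, dAux a c M n :=
    Finset.sum_Ico_consecutive _ (Nat.zero_le M) hMN.le
  rw [Finset.range_eq_Ico, ← hsplit, h1, zero_add,
    Finset.sum_eq_sum_Ico_succ_bot hMN, Finset.sum_Ico_eq_sum_range]
  -- telescoping for the tail
  set F : ℕ → ℝ := fun j => c * (1 - a) ^ (M + j) * ((N : ℝ) - 1 - (M : ℝ) - (j : ℝ)) * a
    with hF
  have htail : ∀ i ∈ Finset.range (N - (M + 1)),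
      dAux a c M (M + 1 + i) = F (i + 1) - F i := by
    intro i _
    have h2 : ¬ (M + 1 + i < M) := by omega
    have h3 : M + 1 + i ≠ M := by omega
    have h4 : M + 1 + i - 1 = M + i := by omega
    rw [dAux, if_neg h2, if_neg h3, h4, hF]
    have hpow : (1 - a) ^ (M + (i + 1)) = (1 - a) ^ (M + i) * (1 - a) := by
      rw [show M + (i + 1) = (M + i) + 1 from by omega, pow_succ]
    simp only []
    rw [hpow]
    push_cast
    linear_combination (a * c * (1 - a) ^ (M + i)) * ha
  rw [Finset.sum_congr rfl htail, Finset.sum_range_sub F (N - (M + 1))]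
  have hcast : ((N - (M + 1) : ℕ) : ℝ) = (N : ℝ) - ((M : ℝ) + 1) := by
    rw [Nat.cast_sub hMN]; push_cast; ring
  have hFtop : F (N - (M + 1)) = 0 := by
    simp only [hF]
    rw [hcast]; ring
  rw [hFtop, dAux, if_neg (lt_irrefl M), if_pos rfl, hF]
  simp only [Nat.cast_zero, Nat.add_zero]
  linear_combination (-(c * (1 - a) ^ M)) * ha


/-- Lemma 5, exact version. With equal round weights, the
point with all shares equal to `1/(N+1)` is a critical point of the
durable-good revenue: every partial derivative vanishes there. -/
theorem durable_equal_weights_critical_point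
    (N : ℕ) (hN : 1 ≤ N) (y₀ c : ℝ) :
    ∀ m : Fin N,
      HasDerivAt
        (fun x : ℝ => durableRevenue N y₀ (fun _ => c)
          (Function.update (fun _ : Fin N => (1 : ℝ) / ((N : ℝ) + 1)) m x))
        0 ((1 : ℝ) / ((N : ℝ) + 1)) := by
  intro m
  set a : ℝ := 1 / ((N : ℝ) + 1) with ha
  have hN1 : ((N : ℝ) + 1) ≠ 0 := by positivity
  have haN : a * ((N : ℝ) + 1) = 1 := by rw [ha]; field_simp
  set M := (m : ℕ) with hMdef
  have hMN : M < N := m.isLt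
  have key : ∀ n : Fin N,
      HasDerivAt (fun x : ℝ =>
        (Function.update (fun _ : Fin N => a) m x) n *
          (1 - ∑ i ∈ Finset.Iic n, (Function.update (fun _ : Fin N => a) m x) i) *
          ((fun _ : Fin N => c) n) *
          ∏ i ∈ Finset.Iio n, (1 - (Function.update (fun _ : Fin N => a) m x) i))
        (dAux a c M (n : ℕ)) a := by
    intro n
    rcases lt_trichotomy (n : ℕ) M with h | h | h
    · -- n < m : term constant in x
      have hconst : (fun x : ℝ =>
          (Function.update (fun _ : Fin N => a) m x) n *
            (1 - ∑ i ∈ Finset.Iic n, (Function.update (fun _ : Fin N => a) m x) i) *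
            ((fun _ : Fin N => c) n) *
            ∏ i ∈ Finset.Iio n, (1 - (Function.update (fun _ : Fin N => a) m x) i)) =
          (fun _ : ℝ => a * (1 - ∑ i ∈ Finset.Iic n, a) * c *
            ∏ i ∈ Finset.Iio n, (1 - a)) := by
        funext x
        have hnm : n ≠ m := fun e => by simp [e, hMdef] at h
        rw [Function.update_of_ne hnm]
        have hs : ∑ i ∈ Finset.Iic n, (Function.update (fun _ : Fin N => a) m x) i
            = ∑ i ∈ Finset.Iic n, a := by
          refine Finset.sum_congr rfl fun i hi => ?_
          have : (i : ℕ) ≤ (n : ℕ) := Fin.le_def.mp (Finset.mem_Iic.mp hi)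
          exact Function.update_of_ne (fun e => by simp [Fin.ext_iff, hMdef] at e; omega) _ _
        have hp : ∏ i ∈ Finset.Iio n, (1 - (Function.update (fun _ : Fin N => a) m x) i)
            = ∏ i ∈ Finset.Iio n, (1 - a) := by
          refine Finset.prod_congr rfl fun i hi => ?_
          have : (i : ℕ) < (n : ℕ) := Fin.lt_def.mp (Finset.mem_Iio.mp hi)
          rw [Function.update_of_ne (fun e => by simp [Fin.ext_iff, hMdef] at e; omega)]
        rw [hs, hp]
      rw [hconst]
      have hd0 : dAux a c M (n : ℕ) = 0 := if_pos h
      rw [hd0]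
      exact hasDerivAt_const _ _
    · -- n = m
      have hnm : n = m := Fin.ext h
      rw [hnm]
      have hs : ∀ x : ℝ, ∑ i ∈ Finset.Iic m, (Function.update (fun _ : Fin N => a) m x) i
          = x + (M : ℝ) * a := by
        intro x
        rw [← Finset.Iio_insert, Finset.sum_insert (by simp)]
        congr 1
        · exact Function.update_self _ _ _
        · rw [Finset.sum_congr rfl fun i hi => Function.update_of_ne
            (ne_of_lt (Finset.mem_Iio.mp hi)) _ _, Finset.sum_const, Fin.card_Iio,
            nsmul_eq_mul, hMdef]
      have hp : ∀ x : ℝ, ∏ i ∈ Finset.Iio m, (1 - (Function.update (fun _ : Fin N => a) m x) i)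
          = (1 - a) ^ M := by
        intro x
        rw [Finset.prod_congr rfl fun i hi => by
            rw [Function.update_of_ne (ne_of_lt (Finset.mem_Iio.mp hi))],
          Finset.prod_const, Fin.card_Iio, hMdef]
      have hfun : (fun x : ℝ =>
          (Function.update (fun _ : Fin N => a) m x) m *
            (1 - ∑ i ∈ Finset.Iic m, (Function.update (fun _ : Fin N => a) m x) i) *
            ((fun _ : Fin N => c) m) *
            ∏ i ∈ Finset.Iio m, (1 - (Function.update (fun _ : Fin N => a) m x) i)) =
          (fun x : ℝ => x * (1 - (x + (M : ℝ) * a)) * c * (1 - a) ^ M) := by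
        funext x
        rw [hs x, hp x, Function.update_self]
      rw [hfun]
      have h2 : HasDerivAt (fun x : ℝ => 1 - (x + (M : ℝ) * a)) (-1) a := by
        simpa using ((hasDerivAt_id a).add_const ((M : ℝ) * a)).const_sub 1
      have h3 := (((hasDerivAt_id a).mul h2).mul_const c).mul_const ((1 - a) ^ M)
      convert h3 using 1
      case e'_4 => rfl
      case e'_5 => rfl
      case e'_8 => rfl
      have hd : dAux a c M (m : ℕ) = c * (1 - a) ^ M * (1 - ((M : ℝ) + 2) * a) := by
        rw [dAux, if_neg (by omega), if_pos hMdef.symm]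
      rw [hd, id_eq]
      ring
    · -- m < n
      have hnm : n ≠ m := Fin.ne_of_val_ne (by omega)
      have hmem : m ∈ Finset.Iic n := Finset.mem_Iic.mpr (Fin.le_def.mpr (le_of_lt h))
      have hmem' : m ∈ Finset.Iio n := Finset.mem_Iio.mpr (Fin.lt_def.mpr h)
      have hs : ∀ x : ℝ, ∑ i ∈ Finset.Iic n, (Function.update (fun _ : Fin N => a) m x) i
          = x + (n : ℕ) * a := by
        intro x
        rw [← Finset.add_sum_erase _ _ hmem, Function.update_self]
        congr 1
        rw [Finset.sum_congr rfl fun i hi => Function.update_of_ne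
            (Finset.ne_of_mem_erase hi) _ _, Finset.sum_const,
          Finset.card_erase_of_mem hmem, Fin.card_Iic, nsmul_eq_mul]
        simp
      have hp : ∀ x : ℝ, ∏ i ∈ Finset.Iio n, (1 - (Function.update (fun _ : Fin N => a) m x) i)
          = (1 - x) * (1 - a) ^ ((n : ℕ) - 1) := by
        intro x
        rw [← Finset.mul_prod_erase _ _ hmem', Function.update_self]
        congr 1
        rw [Finset.prod_congr rfl fun i hi => by
            rw [Function.update_of_ne (Finset.ne_of_mem_erase hi)],
          Finset.prod_const, Finset.card_erase_of_mem hmem', Fin.card_Iio]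
      have hfun : (fun x : ℝ =>
          (Function.update (fun _ : Fin N => a) m x) n *
            (1 - ∑ i ∈ Finset.Iic n, (Function.update (fun _ : Fin N => a) m x) i) *
            ((fun _ : Fin N => c) n) *
            ∏ i ∈ Finset.Iio n, (1 - (Function.update (fun _ : Fin N => a) m x) i)) =
          (fun x : ℝ => a * (1 - (x + (n : ℕ) * a)) * c *
            ((1 - x) * (1 - a) ^ ((n : ℕ) - 1))) := by
        funext x
        rw [hs x, hp x, Function.update_of_ne hnm]
      rw [hfun]
      have h2 : HasDerivAt (fun x : ℝ => 1 - (x + (n : ℕ) * a)) (-1) a := by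
        simpa using ((hasDerivAt_id a).add_const (((n : ℕ) : ℝ) * a)).const_sub 1
      have hR : HasDerivAt (fun x : ℝ => (1 - x) * (1 - a) ^ ((n : ℕ) - 1))
          ((-1) * (1 - a) ^ ((n : ℕ) - 1)) a := by
        exact (((hasDerivAt_id a).const_sub 1).mul_const _)
      have h3 := ((h2.const_mul a).mul_const c).mul hR
      convert h3 using 1
      case e'_4 => rfl
      case e'_5 => rfl
      case e'_8 => rfl
      have hd : dAux a c M (n : ℕ)
          = a * c * (1 - a) ^ ((n : ℕ) - 1) * ((((n : ℕ) : ℝ) + 2) * a - 2) := by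
        rw [dAux, if_neg (by omega), if_neg (by omega)]
      rw [hd]
      ring
  have main : HasDerivAt (fun x : ℝ => durableRevenue N y₀ (fun _ => c)
      (Function.update (fun _ : Fin N => a) m x))
      (y₀ * ∑ n : Fin N, dAux a c M (n : ℕ)) a := by
    unfold durableRevenue
    exact HasDerivAt.const_mul y₀ (HasDerivAt.fun_sum fun n _ => key n)
  have hz : (∑ n : Fin N, dAux a c M (n : ℕ)) = 0 := by
    rw [Fin.sum_univ_eq_sum_range]
    exact dAux_sum N M hMN c a haN
  rw [hz, mul_zero] at main
  exact main
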